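/- Let U be a Haar-distributed unitary matrix in U(n), with (conjugate-transposed) rows u₁,…,uₙ ∈ ℂⁿ and u_{i1} the first coordinate of uᵢ. Let ψₙ := n(n+1)·E[min(|v₁|, 3/√(n+1))⁴] for v uniform on the unit sphere of ℂⁿ. Define the random vector x := Σ_{i=1}^n ( 2(n+1)·min(|u_{i1}|, 3/√(n+1))² − (2ψₙ − 1) )·conj(u_{i1})·uᵢ ∈ ℂⁿ. Then E[‖x‖₂²] ≤ 24·(n+1)/(n+2) + 1 − 4ψₙ²; in particular, if ψₙ ≥ 1/2 then E[‖x‖₂²] ≤ 24. -/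

import Mathlib

open MeasureTheory Matrix Finset Complex

set_option maxHeartbeats 1600000
set_option linter.unusedSectionVars false
set_option linter.unreachableTactic false
set_option linter.unusedTactic false

noncomputable instance {n : ℕ} : MeasurableSpace (Matrix.unitaryGroup (Fin n) ℂ) := borel _
instance {n : ℕ} : BorelSpace (Matrix.unitaryGroup (Fin n) ℂ) := ⟨rfl⟩

/-- Entry of a unitary matrix. -/
def entry {n : ℕ} (U : Matrix.unitaryGroup (Fin n) ℂ) (i j : Fin n) : ℂ :=
  (U : Matrix (Fin n) (Fin n) ℂ) i j

/-- `‖x‖₂²` for `x := Σᵢ (2(n+1)·min(|u_{i1}|, 3/√(n+1))² − (2ψ − 1))·conj(u_{i1})·uᵢ`,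
where `uᵢ` is the conjugate-transposed `i`-th row of `U` (so `uᵢ(j) = conj(U i j)` and
`u_{i1} = conj(U i 0)`). -/
noncomputable def normSqX {n : ℕ} (hn : 0 < n) (ψ : ℝ)
    (U : Matrix.unitaryGroup (Fin n) ℂ) : ℝ :=
  ∑ j : Fin n, ‖∑ i : Fin n,
    ((2 * ((n : ℝ) + 1) *
        (min (‖entry U i ⟨0, hn⟩‖) (3 / Real.sqrt ((n : ℝ) + 1))) ^ 2 -
      (2 * ψ - 1) : ℝ) : ℂ) *
      entry U i ⟨0, hn⟩ * starRingEnd ℂ (entry U i j)‖ ^ 2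

namespace Work
variable {n : ℕ}

noncomputable def sC : ℂ := ((Real.sqrt 2)⁻¹ : ℝ)

lemma normSq_sC_mul (w : ℂ) : normSq (sC * w) = normSq w / 2 := by
  rw [Complex.normSq_mul, sC, Complex.normSq_ofReal]
  rw [← mul_inv, Real.mul_self_sqrt (by norm_num)]
  ring

lemma P2 (a b : ℂ) :
    normSq (1*a+b)^2 + normSq (I*a+b)^2 + normSq (-1*a+b)^2 + normSq (-I*a+b)^2
      = 4*(normSq a + normSq b)^2 + 8*(normSq a * normSq b) := by
  simp only [normSq_apply, add_re, add_im, mul_re, mul_im, I_re, I_im, one_re, one_im,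
    neg_re, neg_im]
  ring

lemma P3 (a b : ℂ) :
    normSq (1*a+b)^3 + normSq (I*a+b)^3 + normSq (-1*a+b)^3 + normSq (-I*a+b)^3
      = 4*(normSq a + normSq b)^3 + 24*(normSq a * normSq b)*(normSq a + normSq b) := by
  simp only [normSq_apply, add_re, add_im, mul_re, mul_im, I_re, I_im, one_re, one_im,
    neg_re, neg_im]
  ring

lemma P4 (b c : ℂ) :
    normSq (1*b+c)*normSq (-(1*b)+c) + normSq (I*b+c)*normSq (-(I*b)+c)
    + normSq (-1*b+c)*normSq (-(-1*b)+c) + normSq (-I*b+c)*normSq (-(-I*b)+c)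
      = 4*(normSq b + normSq c)^2 - 8*(normSq b * normSq c) := by
  simp only [normSq_apply, add_re, add_im, mul_re, mul_im, I_re, I_im, one_re, one_im,
    neg_re, neg_im]
  ring

lemma unit1 : starRingEnd ℂ (1:ℂ) * 1 = 1 := by simp
lemma unitI : starRingEnd ℂ I * I = 1 := by simp
lemma unitm1 : starRingEnd ℂ (-1:ℂ) * (-1) = 1 := by simp
lemma unitmI : starRingEnd ℂ (-I) * (-I) = 1 := by simp


lemma cont_entry (i j : Fin n) :
    Continuous (fun U : Matrix.unitaryGroup (Fin n) ℂ => entry U i j) := by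
  change Continuous ((fun m : Matrix (Fin n) (Fin n) ℂ => m i j) ∘ Subtype.val)
  exact ((continuous_apply j).comp (continuous_apply i)).comp continuous_subtype_val

/-- column sums of normSq are 1 -/
lemma col_sum (U : Matrix.unitaryGroup (Fin n) ℂ) (j : Fin n) :
    ∑ i, Complex.normSq (entry U i j) = 1 := by
  have h := Matrix.UnitaryGroup.star_mul_self U
  have h2 := congrArg (fun M => (M j j).re) h
  simp only [Matrix.mul_apply, Matrix.one_apply_eq] at h2
  rw [Complex.one_re] at h2
  rw [← h2, Complex.re_sum]
  refine Finset.sum_congr rfl fun i _ => ?_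
  rw [Complex.normSq_apply]
  simp [entry, Complex.mul_re, RCLike.star_def, Matrix.star_apply]

lemma normSq_entry_le_one (U : Matrix.unitaryGroup (Fin n) ℂ) (i j : Fin n) :
    Complex.normSq (entry U i j) ≤ 1 := by
  have := col_sum U j
  have h := Finset.single_le_sum (f := fun i => Complex.normSq (entry U i j))
    (fun k _ => Complex.normSq_nonneg _) (Finset.mem_univ i)
  linarith


lemma sum_two_aux (hij : i ≠ j) (x y : ℂ) (h : Fin n → ℂ) :
    ∑ m, (if m = i then x else if m = j then y else h m) =
      x + y + ∑ m, (if m = i ∨ m = j then 0 else h m) := by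
  have : ∀ m : Fin n, (if m = i then x else if m = j then y else h m) =
      (if m = i then x else 0) + (if m = j then y else 0) +
      (if m = i ∨ m = j then 0 else h m) := fun m => by
    by_cases h1 : m = i <;> by_cases h2 : m = j <;> simp_all
  rw [Finset.sum_congr rfl fun m _ => this m]
  rw [Finset.sum_add_distrib, Finset.sum_add_distrib]
  simp [Finset.sum_ite_eq']

lemma delta_aux (i j p q : Fin n) :
    ∀ m : Fin n, (if m = i ∨ m = j then (0:ℂ) else (if p = m then 1 else 0) * (if q = m then 1 else 0)) =
      if m = p then (if p = q ∧ ¬(p = i ∨ p = j) then 1 else 0) else 0 := by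
  intro m
  by_cases e1 : m = p <;> by_cases e2 : p = q <;> by_cases e3 : p = i <;>
    by_cases e4 : p = j <;> simp_all <;> aesop

/-- the 2x2 block matrix -/
def tbMat (a b c d : ℂ) (i j : Fin n) : Matrix (Fin n) (Fin n) ℂ :=
  fun p q => if p = i then (if q = i then a else if q = j then b else 0)
    else if p = j then (if q = i then c else if q = j then d else 0)
    else if q = p then 1 else 0

lemma tbMat_mem {a b c d : ℂ} {i j : Fin n} (hij : i ≠ j)
    (h1 : (starRingEnd ℂ a) * a + (starRingEnd ℂ c) * c = 1)
    (h2 : (starRingEnd ℂ b) * b + (starRingEnd ℂ d) * d = 1)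
    (h3 : (starRingEnd ℂ a) * b + (starRingEnd ℂ c) * d = 0) :
    tbMat a b c d i j ∈ Matrix.unitaryGroup (Fin n) ℂ := by
  have h4 : (starRingEnd ℂ b) * a + (starRingEnd ℂ d) * c = 0 := by
    have := congrArg (starRingEnd ℂ) h3
    simpa [mul_comm] using this
  rw [Matrix.mem_unitaryGroup_iff']
  ext p q
  rw [Matrix.mul_apply]
  have key : ∀ m : Fin n, (star (tbMat a b c d i j)) p m * (tbMat a b c d i j) m q =
      (if m = i then (starRingEnd ℂ (if p = i then a else if p = j then b else 0)) *
          (if q = i then a else if q = j then b else 0)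
       else if m = j then (starRingEnd ℂ (if p = i then c else if p = j then d else 0)) *
          (if q = i then c else if q = j then d else 0)
       else (if p = m then 1 else 0) * (if q = m then 1 else 0)) := by
    intro m
    rw [Matrix.star_apply, tbMat, tbMat]
    by_cases e1 : m = i <;> by_cases e2 : m = j <;> simp_all [RCLike.star_def]
  rw [Finset.sum_congr rfl fun m _ => key m, sum_two_aux hij]
  rw [Finset.sum_congr rfl fun m _ => delta_aux i j p q m, Finset.sum_ite_eq' Finset.univ p]
  simp only [Finset.mem_univ, if_true]
  clear key
  rw [Matrix.one_apply]
  by_cases hp : p = i <;> by_cases hp2 : p = j <;> by_cases hq : q = i <;> by_cases hq2 : q = j <;>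
    subst_vars <;> (try simp_all) <;>
    first
      | aesop
      | (rw [if_neg (by aesop)]; try simp)
      | (rw [if_pos (by aesop)]; try simp)

noncomputable def tb (a b c d : ℂ) (i j : Fin n) (hij : i ≠ j)
    (h1 : (starRingEnd ℂ a) * a + (starRingEnd ℂ c) * c = 1)
    (h2 : (starRingEnd ℂ b) * b + (starRingEnd ℂ d) * d = 1)
    (h3 : (starRingEnd ℂ a) * b + (starRingEnd ℂ c) * d = 0) :
    Matrix.unitaryGroup (Fin n) ℂ :=
  ⟨tbMat a b c d i j, tbMat_mem hij h1 h2 h3⟩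

lemma sum_two {i j : Fin n} (hij : i ≠ j) (x y : ℂ) (g : Fin n → ℂ) :
    ∑ m, (if m = i then x else if m = j then y else 0) * g m = x * g i + y * g j := by
  have key : ∀ m, (if m = i then x else if m = j then y else 0) * g m =
      (if m = i then x * g i else 0) + (if m = j then y * g j else 0) := fun m => by
    by_cases h1 : m = i <;> by_cases h2 : m = j <;> simp_all
  rw [Finset.sum_congr rfl fun m _ => key m, Finset.sum_add_distrib]
  simp [Finset.sum_ite_eq']

lemma entry_mul (W U : Matrix.unitaryGroup (Fin n) ℂ) (i j : Fin n) :
    entry (W * U) i j = ∑ k, entry W i k * entry U k j := by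
  simp [entry, Matrix.UnitaryGroup.mul_val, Matrix.mul_apply]

lemma tb_action (a b c d : ℂ) (i j : Fin n) (hij : i ≠ j) h1 h2 h3
    (U : Matrix.unitaryGroup (Fin n) ℂ) (p q : Fin n) :
    entry (tb a b c d i j hij h1 h2 h3 * U) p q =
      if p = i then a * entry U i q + b * entry U j q
      else if p = j then c * entry U i q + d * entry U j q
      else entry U p q := by
  rw [entry_mul]
  have he : ∀ m, entry (tb a b c d i j hij h1 h2 h3) p m = tbMat a b c d i j p m := fun m => rfl
  by_cases hp : p = i
  · subst hp
    rw [Finset.sum_congr rfl fun m _ => by rw [he m, tbMat, if_pos rfl]]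
    rw [if_pos rfl, sum_two hij a b _]
  · by_cases hp2 : p = j
    · subst hp2
      rw [Finset.sum_congr rfl fun m _ => by rw [he m, tbMat, if_neg hp, if_pos rfl]]
      rw [if_neg hp, if_pos rfl, sum_two hij c d _]
    · rw [Finset.sum_congr rfl fun m _ => by rw [he m, tbMat, if_neg hp, if_neg hp2]]
      rw [if_neg hp, if_neg hp2]
      simp [Finset.sum_ite_eq']


lemma sC_conj : starRingEnd ℂ sC = sC := Complex.conj_ofReal _

lemma sC_sq : sC * sC = 1/2 := by
  rw [sC]
  norm_cast
  rw [← mul_inv]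
  rw [Real.mul_self_sqrt (by norm_num)]
  norm_num

noncomputable def rotU (z : ℂ) (hz : starRingEnd ℂ z * z = 1) (i j : Fin n) (hij : i ≠ j) :
    Matrix.unitaryGroup (Fin n) ℂ :=
  tb (z * sC) sC (-(z * sC)) sC i j hij
    (by simp only [_root_.map_mul, map_neg, sC_conj, mul_neg, neg_mul, neg_neg]
        linear_combination (2*sC*sC) * hz + 2*sC_sq)
    (by rw [sC_conj]; linear_combination 2*sC_sq)
    (by simp only [_root_.map_mul, map_neg, sC_conj]; ring)

noncomputable def swapU (i j : Fin n) (hij : i ≠ j) : Matrix.unitaryGroup (Fin n) ℂ :=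
  tb 0 1 1 0 i j hij (by simp) (by simp) (by simp)

variable (μ : Measure (Matrix.unitaryGroup (Fin n) ℂ)) [μ.IsHaarMeasure]

lemma int_inv (F : Matrix.unitaryGroup (Fin n) ℂ → ℝ) (W : Matrix.unitaryGroup (Fin n) ℂ) :
    ∫ U, F (W * U) ∂μ = ∫ U, F U ∂μ :=
  integral_mul_left_eq_self F W

lemma int_rot (j0 i j : Fin n) (hij : i ≠ j) (z : ℂ) (hz : starRingEnd ℂ z * z = 1)
    (F : (Fin n → ℂ) → ℝ) :
    ∫ U, F (fun p => if p = i then sC * (z * entry U i j0 + entry U j j0)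
      else if p = j then sC * (-(z * entry U i j0) + entry U j j0) else entry U p j0) ∂μ
      = ∫ U, F (fun p => entry U p j0) ∂μ := by
  rw [← int_inv μ (fun U => F (fun p => entry U p j0)) (rotU z hz i j hij)]
  refine integral_congr_ae (Filter.Eventually.of_forall fun U => ?_)
  dsimp only
  congr 1
  funext p
  rw [rotU, tb_action]
  split_ifs <;> ring

lemma int_swap (j0 i j : Fin n) (hij : i ≠ j) (F : (Fin n → ℂ) → ℝ) :
    ∫ U, F (fun p => if p = i then entry U j j0
      else if p = j then entry U i j0 else entry U p j0) ∂μ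
      = ∫ U, F (fun p => entry U p j0) ∂μ := by
  rw [← int_inv μ (fun U => F (fun p => entry U p j0)) (swapU i j hij)]
  refine integral_congr_ae (Filter.Eventually.of_forall fun U => ?_)
  dsimp only
  congr 1
  funext p
  rw [swapU, tb_action]
  split_ifs <;> ring


/-- |v_i|^2 as a function on the unitary group -/
noncomputable def tF (j0 i : Fin n) (U : Matrix.unitaryGroup (Fin n) ℂ) : ℝ :=
  Complex.normSq (entry U i j0)

lemma tF_nonneg (j0 i : Fin n) (U) : 0 ≤ tF j0 i U := Complex.normSq_nonneg _
lemma tF_le_one (j0 i : Fin n) (U) : tF j0 i U ≤ 1 := normSq_entry_le_one U i j0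

lemma cont_tF (j0 i : Fin n) : Continuous (tF j0 i) :=
  Complex.continuous_normSq.comp (cont_entry i j0)

section Meas2
variable (μ : Measure (Matrix.unitaryGroup (Fin n) ℂ)) [μ.IsHaarMeasure] [IsProbabilityMeasure μ]

lemma bddInteg (F : Matrix.unitaryGroup (Fin n) ℂ → ℝ) (hF : Continuous F) (C : ℝ)
    (hC : ∀ U, |F U| ≤ C) : Integrable F μ :=
  ⟨hF.aestronglyMeasurable, HasFiniteIntegral.of_bounded (C := C) (Filter.Eventually.of_forall hC)⟩

lemma abs01 {x : ℝ} (h0 : 0 ≤ x) (h1 : x ≤ 1) : |x| ≤ 1 := abs_le.2 ⟨by linarith, h1⟩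

/-- integrability of monomials in the tF's -/
lemma integ_t (j0 i : Fin n) : Integrable (tF j0 i) μ :=
  bddInteg μ _ (cont_tF j0 i) 1 fun U => abs01 (tF_nonneg j0 i U) (tF_le_one j0 i U)

lemma integ_t2 (j0 i : Fin n) : Integrable (fun U => tF j0 i U ^ 2) μ := by
  refine bddInteg μ _ ((cont_tF j0 i).pow 2) 1 fun U => abs01 ?_ ?_
  · exact pow_nonneg (tF_nonneg j0 i U) 2
  · exact pow_le_one₀ (tF_nonneg j0 i U) (tF_le_one j0 i U)

lemma integ_t3 (j0 i : Fin n) : Integrable (fun U => tF j0 i U ^ 3) μ := by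
  refine bddInteg μ _ ((cont_tF j0 i).pow 3) 1 fun U => abs01 ?_ ?_
  · exact pow_nonneg (tF_nonneg j0 i U) 3
  · exact pow_le_one₀ (tF_nonneg j0 i U) (tF_le_one j0 i U)

lemma integ_tt (j0 i j : Fin n) : Integrable (fun U => tF j0 i U * tF j0 j U) μ := by
  refine bddInteg μ _ ((cont_tF j0 i).mul (cont_tF j0 j)) 1 fun U => abs01 ?_ ?_
  · exact mul_nonneg (tF_nonneg j0 i U) (tF_nonneg j0 j U)
  · exact mul_le_one₀ (tF_le_one j0 i U) (tF_nonneg j0 j U) (tF_le_one j0 j U)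

lemma integ_t2t (j0 i j : Fin n) : Integrable (fun U => tF j0 i U ^2 * tF j0 j U) μ := by
  refine bddInteg μ _ (((cont_tF j0 i).pow 2).mul (cont_tF j0 j)) 1 fun U => abs01 ?_ ?_
  · exact mul_nonneg (pow_nonneg (tF_nonneg j0 i U) 2) (tF_nonneg j0 j U)
  · exact mul_le_one₀ (pow_le_one₀ (tF_nonneg j0 i U) (tF_le_one j0 i U))
      (tF_nonneg j0 j U) (tF_le_one j0 j U)

lemma integ_ttt (j0 i j k : Fin n) :
    Integrable (fun U => tF j0 i U * tF j0 j U * tF j0 k U) μ := by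
  refine bddInteg μ _ (((cont_tF j0 i).mul (cont_tF j0 j)).mul (cont_tF j0 k)) 1
    fun U => abs01 ?_ ?_
  · exact mul_nonneg (mul_nonneg (tF_nonneg j0 i U) (tF_nonneg j0 j U)) (tF_nonneg j0 k U)
  · exact mul_le_one₀ (mul_le_one₀ (tF_le_one j0 i U) (tF_nonneg j0 j U) (tF_le_one j0 j U))
      (tF_nonneg j0 k U) (tF_le_one j0 k U)

/-- swap symmetry for powers -/
lemma swap_pow (j0 i j : Fin n) (hij : i ≠ j) (k : ℕ) :
    ∫ U, tF j0 j U ^ k ∂μ = ∫ U, tF j0 i U ^ k ∂μ := by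
  have h := int_swap μ j0 i j hij (fun v => Complex.normSq (v i) ^ k)
  simpa [tF] using h

lemma swap_t2t (j0 i j : Fin n) (hij : i ≠ j) :
    ∫ U, tF j0 i U ^2 * tF j0 j U ∂μ = ∫ U, tF j0 j U ^2 * tF j0 i U ∂μ := by
  have h := int_swap μ j0 i j hij (fun v => Complex.normSq (v j) ^ 2 * Complex.normSq (v i))
  simpa [tF, hij, hij.symm] using h

end Meas2

section Meas3
variable (μ : Measure (Matrix.unitaryGroup (Fin n) ℂ)) [μ.IsHaarMeasure] [IsProbabilityMeasure μ]

lemma abs_of_normSq_le_one {a : ℂ} (h : Complex.normSq a ≤ 1) : ‖a‖ ≤ 1 := by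
  rw [Complex.norm_def]
  calc Real.sqrt (normSq a) ≤ Real.sqrt 1 := Real.sqrt_le_sqrt h
    _ = 1 := Real.sqrt_one

lemma comb_le_two (z : ℂ) (hz : ‖z‖ = 1) (U : Matrix.unitaryGroup (Fin n) ℂ)
    (i j j0 : Fin n) : normSq (sC*(z*entry U i j0 + entry U j j0)) ≤ 2 := by
  rw [normSq_sC_mul]
  have h1 : ‖z*entry U i j0 + entry U j j0‖ ≤ 2 := by
    calc ‖z*entry U i j0 + entry U j j0‖
        ≤ ‖z*entry U i j0‖ + ‖entry U j j0‖ := norm_add_le _ _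
      _ ≤ 1 + 1 := by
          rw [norm_mul, hz, one_mul]
          exact add_le_add (abs_of_normSq_le_one (normSq_entry_le_one U i j0))
            (abs_of_normSq_le_one (normSq_entry_le_one U j j0))
      _ = 2 := by norm_num
  have h2 : normSq (z*entry U i j0 + entry U j j0) ≤ 4 := by
    rw [← Complex.sq_norm]
    nlinarith [norm_nonneg (z*entry U i j0 + entry U j j0)]
  linarith

lemma cont_comb (j0 i j : Fin n) (z : ℂ) :
    Continuous (fun U : Matrix.unitaryGroup (Fin n) ℂ =>
      normSq (sC*(z*entry U i j0 + entry U j j0))) :=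
  Complex.continuous_normSq.comp (continuous_const.mul
    ((continuous_const.mul (cont_entry i j0)).add (cont_entry j j0)))

lemma integ_comb_pow (j0 i j : Fin n) (z : ℂ) (hz : ‖z‖ = 1) (k : ℕ) :
    Integrable (fun U => normSq (sC*(z*entry U i j0 + entry U j j0)) ^ k) μ := by
  refine bddInteg μ _ ((cont_comb j0 i j z).pow k) (2^k) fun U => ?_
  rw [_root_.abs_of_nonneg (pow_nonneg (normSq_nonneg _) k)]
  exact pow_le_pow_left₀ (normSq_nonneg _) (comb_le_two z hz U i j j0) k

lemma integ_comb_triple (j0 i j k : Fin n) (z : ℂ) (hz : ‖z‖ = 1) :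
    Integrable (fun U => tF j0 i U * (normSq (sC*(z*entry U j j0 + entry U k j0))
      * normSq (sC*(-(z*entry U j j0) + entry U k j0)))) μ := by
  have hz' : ‖-z‖ = 1 := by rw [norm_neg]; exact hz
  refine bddInteg μ _ ((cont_tF j0 i).mul ((cont_comb j0 j k z).mul ?_)) 4 fun U => ?_
  · have := cont_comb j0 j k (-z)
    simpa [neg_mul] using this
  · rw [_root_.abs_of_nonneg (mul_nonneg (tF_nonneg j0 i U)
      (mul_nonneg (normSq_nonneg _) (normSq_nonneg _)))]
    have h1 := comb_le_two z hz U j k j0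
    have h2 : normSq (sC*(-(z*entry U j j0) + entry U k j0)) ≤ 2 := by
      have := comb_le_two (-z) hz' U j k j0
      simpa [neg_mul] using this
    have p0 : 0 ≤ normSq (sC*(z*entry U j j0 + entry U k j0)) * normSq (sC*(-(z*entry U j j0) + entry U k j0)) :=
      mul_nonneg (normSq_nonneg _) (normSq_nonneg _)
    have p1 : normSq (sC*(z*entry U j j0 + entry U k j0)) * normSq (sC*(-(z*entry U j j0) + entry U k j0)) ≤ 4 := by
      nlinarith [normSq_nonneg (sC*(z*entry U j j0 + entry U k j0)),
        normSq_nonneg (sC*(-(z*entry U j j0) + entry U k j0))]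
    calc tF j0 i U * (normSq (sC*(z*entry U j j0 + entry U k j0)) * normSq (sC*(-(z*entry U j j0) + entry U k j0)))
        ≤ 1 * (normSq (sC*(z*entry U j j0 + entry U k j0)) * normSq (sC*(-(z*entry U j j0) + entry U k j0))) :=
          mul_le_mul_of_nonneg_right (tF_le_one j0 i U) p0
      _ ≤ 4 := by linarith

lemma rot_pow (j0 i j : Fin n) (hij : i ≠ j) (z : ℂ) (hz : starRingEnd ℂ z * z = 1) (k : ℕ) :
    ∫ U, normSq (sC*(z*entry U i j0 + entry U j j0)) ^ k ∂μ = ∫ U, tF j0 i U ^ k ∂μ := by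
  have h := int_rot μ j0 i j hij z hz (fun v => Complex.normSq (v i) ^ k)
  simpa [tF, hij] using h

lemma rot_triple (j0 i j k : Fin n) (hij : j ≠ k) (hi1 : i ≠ j) (hi2 : i ≠ k)
    (z : ℂ) (hz : starRingEnd ℂ z * z = 1) :
    ∫ U, tF j0 i U * (normSq (sC*(z*entry U j j0 + entry U k j0))
      * normSq (sC*(-(z*entry U j j0) + entry U k j0))) ∂μ
    = ∫ U, tF j0 i U * (tF j0 j U * tF j0 k U) ∂μ := by
  have h := int_rot μ j0 j k hij z hz
    (fun v => Complex.normSq (v i) * (Complex.normSq (v j) * Complex.normSq (v k)))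
  simpa [tF, hij, hi1, hi2, hij.symm, hi1.symm, hi2.symm] using h

lemma abs1 : ‖(1:ℂ)‖ = 1 := by simp
lemma absI : ‖I‖ = 1 := Complex.norm_I
lemma absm1 : ‖(-1:ℂ)‖ = 1 := by simp
lemma absmI : ‖-I‖ = 1 := by simp

/-- E[t_i t_j] = E[t_i^2]/2 for i ≠ j -/
lemma pair_id (j0 i j : Fin n) (hij : i ≠ j) :
    ∫ U, tF j0 i U * tF j0 j U ∂μ = (∫ U, tF j0 i U ^ 2 ∂μ) / 2 := by
  have e1 := rot_pow μ j0 i j hij 1 unit1 2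
  have eI := rot_pow μ j0 i j hij I unitI 2
  have em1 := rot_pow μ j0 i j hij (-1) unitm1 2
  have emI := rot_pow μ j0 i j hij (-I) unitmI 2
  have i1 := integ_comb_pow μ j0 i j 1 abs1 2
  have iI := integ_comb_pow μ j0 i j I absI 2
  have im1 := integ_comb_pow μ j0 i j (-1) absm1 2
  have imI := integ_comb_pow μ j0 i j (-I) absmI 2
  have iR2 : Integrable (fun U => normSq (sC*((-1)*entry U i j0 + entry U j j0))^2
      + normSq (sC*((-I)*entry U i j0 + entry U j j0))^2) μ := im1.add imI
  have iR1 : Integrable (fun U => normSq (sC*(I*entry U i j0 + entry U j j0))^2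
      + (normSq (sC*((-1)*entry U i j0 + entry U j j0))^2
      + normSq (sC*((-I)*entry U i j0 + entry U j j0))^2)) μ := iI.add iR2
  have key : ∫ U, (normSq (sC*(1*entry U i j0 + entry U j j0))^2
      + (normSq (sC*(I*entry U i j0 + entry U j j0))^2
      + (normSq (sC*((-1)*entry U i j0 + entry U j j0))^2
      + normSq (sC*((-I)*entry U i j0 + entry U j j0))^2))) ∂μ
      = 4 * ∫ U, tF j0 i U ^2 ∂μ := by
    rw [integral_add i1 iR1, integral_add iI iR2, integral_add im1 imI, e1, eI, em1, emI]
    ring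
  have hpt : ∀ U, (normSq (sC*(1*entry U i j0 + entry U j j0))^2
      + (normSq (sC*(I*entry U i j0 + entry U j j0))^2
      + (normSq (sC*((-1)*entry U i j0 + entry U j j0))^2
      + normSq (sC*((-I)*entry U i j0 + entry U j j0))^2)))
      = tF j0 i U ^2 + (tF j0 j U ^2 + 4*(tF j0 i U * tF j0 j U)) := by
    intro U
    rw [normSq_sC_mul, normSq_sC_mul, normSq_sC_mul, normSq_sC_mul]
    have h2 := P2 (entry U i j0) (entry U j j0)
    have hx : tF j0 i U = normSq (entry U i j0) := rfl
    have hy : tF j0 j U = normSq (entry U j j0) := rfl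
    rw [hx, hy]
    linear_combination h2 / 4
  rw [integral_congr_ae (Filter.Eventually.of_forall hpt)] at key
  have j2 : Integrable (fun U => 4*(tF j0 i U * tF j0 j U)) μ := (integ_tt μ j0 i j).const_mul 4
  have jR : Integrable (fun U => tF j0 j U ^2 + 4*(tF j0 i U * tF j0 j U)) μ :=
    (integ_t2 μ j0 j).add j2
  rw [integral_add (integ_t2 μ j0 i) jR, integral_add (integ_t2 μ j0 j) j2,
    MeasureTheory.integral_const_mul, swap_pow μ j0 i j hij 2] at key
  linarith

/-- E[t_i^2 t_j] = E[t_i^3]/3 for i ≠ j -/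
lemma cube_id (j0 i j : Fin n) (hij : i ≠ j) :
    ∫ U, tF j0 i U ^2 * tF j0 j U ∂μ = (∫ U, tF j0 i U ^ 3 ∂μ) / 3 := by
  have e1 := rot_pow μ j0 i j hij 1 unit1 3
  have eI := rot_pow μ j0 i j hij I unitI 3
  have em1 := rot_pow μ j0 i j hij (-1) unitm1 3
  have emI := rot_pow μ j0 i j hij (-I) unitmI 3
  have i1 := integ_comb_pow μ j0 i j 1 abs1 3
  have iI := integ_comb_pow μ j0 i j I absI 3
  have im1 := integ_comb_pow μ j0 i j (-1) absm1 3
  have imI := integ_comb_pow μ j0 i j (-I) absmI 3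
  have iR2 : Integrable (fun U => normSq (sC*((-1)*entry U i j0 + entry U j j0))^3
      + normSq (sC*((-I)*entry U i j0 + entry U j j0))^3) μ := im1.add imI
  have iR1 : Integrable (fun U => normSq (sC*(I*entry U i j0 + entry U j j0))^3
      + (normSq (sC*((-1)*entry U i j0 + entry U j j0))^3
      + normSq (sC*((-I)*entry U i j0 + entry U j j0))^3)) μ := iI.add iR2
  have key : ∫ U, (normSq (sC*(1*entry U i j0 + entry U j j0))^3
      + (normSq (sC*(I*entry U i j0 + entry U j j0))^3
      + (normSq (sC*((-1)*entry U i j0 + entry U j j0))^3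
      + normSq (sC*((-I)*entry U i j0 + entry U j j0))^3))) ∂μ
      = 4 * ∫ U, tF j0 i U ^3 ∂μ := by
    rw [integral_add i1 iR1, integral_add iI iR2, integral_add im1 imI, e1, eI, em1, emI]
    ring
  have hpt : ∀ U, (normSq (sC*(1*entry U i j0 + entry U j j0))^3
      + (normSq (sC*(I*entry U i j0 + entry U j j0))^3
      + (normSq (sC*((-1)*entry U i j0 + entry U j j0))^3
      + normSq (sC*((-I)*entry U i j0 + entry U j j0))^3)))
      = tF j0 i U ^3 / 2 + (tF j0 j U ^3 / 2
        + ((9/2) * (tF j0 i U ^2 * tF j0 j U) + (9/2) * (tF j0 j U ^2 * tF j0 i U))) := by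
    intro U
    rw [normSq_sC_mul, normSq_sC_mul, normSq_sC_mul, normSq_sC_mul]
    have h3 := P3 (entry U i j0) (entry U j j0)
    have hx : tF j0 i U = normSq (entry U i j0) := rfl
    have hy : tF j0 j U = normSq (entry U j j0) := rfl
    rw [hx, hy]
    linear_combination h3 / 8
  rw [integral_congr_ae (Filter.Eventually.of_forall hpt)] at key
  have j1 : Integrable (fun U => (9/2 : ℝ)*(tF j0 i U ^2 * tF j0 j U)) μ :=
    (integ_t2t μ j0 i j).const_mul _
  have j2 : Integrable (fun U => (9/2 : ℝ)*(tF j0 j U ^2 * tF j0 i U)) μ :=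
    (integ_t2t μ j0 j i).const_mul _
  have jR2 : Integrable (fun U => (9/2 : ℝ)*(tF j0 i U ^2 * tF j0 j U)
      + (9/2 : ℝ)*(tF j0 j U ^2 * tF j0 i U)) μ := j1.add j2
  have jR1 : Integrable (fun U => tF j0 j U ^3 / 2
      + ((9/2 : ℝ)*(tF j0 i U ^2 * tF j0 j U) + (9/2 : ℝ)*(tF j0 j U ^2 * tF j0 i U))) μ :=
    ((integ_t3 μ j0 j).div_const 2).add jR2
  rw [integral_add ((integ_t3 μ j0 i).div_const 2) jR1,
    integral_add ((integ_t3 μ j0 j).div_const 2) jR2, integral_add j1 j2,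
    MeasureTheory.integral_const_mul, MeasureTheory.integral_const_mul,
    integral_div, integral_div, swap_pow μ j0 i j hij 3, swap_t2t μ j0 j i hij.symm] at key
  linarith

/-- E[t_i t_j t_k] for distinct indices -/
lemma triple_id (j0 i j k : Fin n) (hjk : j ≠ k) (hij : i ≠ j) (hik : i ≠ k) :
    ∫ U, tF j0 i U * (tF j0 j U * tF j0 k U) ∂μ
      = ((∫ U, tF j0 j U ^2 * tF j0 i U ∂μ) + (∫ U, tF j0 k U ^2 * tF j0 i U ∂μ)) / 4 := by
  have e1 := rot_triple μ j0 i j k hjk hij hik 1 unit1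
  have eI := rot_triple μ j0 i j k hjk hij hik I unitI
  have em1 := rot_triple μ j0 i j k hjk hij hik (-1) unitm1
  have emI := rot_triple μ j0 i j k hjk hij hik (-I) unitmI
  have i1 := integ_comb_triple μ j0 i j k 1 abs1
  have iI := integ_comb_triple μ j0 i j k I absI
  have im1 := integ_comb_triple μ j0 i j k (-1) absm1
  have imI := integ_comb_triple μ j0 i j k (-I) absmI
  have iR2 : Integrable (fun U => tF j0 i U * (normSq (sC*((-1)*entry U j j0 + entry U k j0))
      * normSq (sC*(-((-1)*entry U j j0) + entry U k j0)))
      + tF j0 i U * (normSq (sC*((-I)*entry U j j0 + entry U k j0))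
      * normSq (sC*(-((-I)*entry U j j0) + entry U k j0)))) μ := im1.add imI
  have iR1 : Integrable (fun U => tF j0 i U * (normSq (sC*(I*entry U j j0 + entry U k j0))
      * normSq (sC*(-(I*entry U j j0) + entry U k j0)))
      + (tF j0 i U * (normSq (sC*((-1)*entry U j j0 + entry U k j0))
      * normSq (sC*(-((-1)*entry U j j0) + entry U k j0)))
      + tF j0 i U * (normSq (sC*((-I)*entry U j j0 + entry U k j0))
      * normSq (sC*(-((-I)*entry U j j0) + entry U k j0))))) μ := iI.add iR2
  have key : ∫ U, (tF j0 i U * (normSq (sC*(1*entry U j j0 + entry U k j0))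
      * normSq (sC*(-(1*entry U j j0) + entry U k j0)))
      + (tF j0 i U * (normSq (sC*(I*entry U j j0 + entry U k j0))
      * normSq (sC*(-(I*entry U j j0) + entry U k j0)))
      + (tF j0 i U * (normSq (sC*((-1)*entry U j j0 + entry U k j0))
      * normSq (sC*(-((-1)*entry U j j0) + entry U k j0)))
      + tF j0 i U * (normSq (sC*((-I)*entry U j j0 + entry U k j0))
      * normSq (sC*(-((-I)*entry U j j0) + entry U k j0)))))) ∂μ
      = 4 * ∫ U, tF j0 i U * (tF j0 j U * tF j0 k U) ∂μ := by
    rw [integral_add i1 iR1, integral_add iI iR2, integral_add im1 imI, e1, eI, em1, emI]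
    ring
  have hpt : ∀ U, (tF j0 i U * (normSq (sC*(1*entry U j j0 + entry U k j0))
      * normSq (sC*(-(1*entry U j j0) + entry U k j0)))
      + (tF j0 i U * (normSq (sC*(I*entry U j j0 + entry U k j0))
      * normSq (sC*(-(I*entry U j j0) + entry U k j0)))
      + (tF j0 i U * (normSq (sC*((-1)*entry U j j0 + entry U k j0))
      * normSq (sC*(-((-1)*entry U j j0) + entry U k j0)))
      + tF j0 i U * (normSq (sC*((-I)*entry U j j0 + entry U k j0))
      * normSq (sC*(-((-I)*entry U j j0) + entry U k j0))))))
      = tF j0 j U ^2 * tF j0 i U + tF j0 k U ^2 * tF j0 i U := by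
    intro U
    rw [normSq_sC_mul, normSq_sC_mul, normSq_sC_mul, normSq_sC_mul,
      normSq_sC_mul, normSq_sC_mul, normSq_sC_mul, normSq_sC_mul]
    have h4 := P4 (entry U j j0) (entry U k j0)
    have hx : tF j0 i U = normSq (entry U i j0) := rfl
    have hy : tF j0 j U = normSq (entry U j j0) := rfl
    have hz : tF j0 k U = normSq (entry U k j0) := rfl
    rw [hx, hy, hz]
    linear_combination (normSq (entry U i j0)) * h4 / 4
  rw [integral_congr_ae (Filter.Eventually.of_forall hpt)] at key
  rw [integral_add (integ_t2t μ j0 j i) (integ_t2t μ j0 k i)] at key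
  linarith

lemma sum_ite_one (i : Fin n) (X Y : ℝ) :
    ∑ j : Fin n, (if j = i then X else Y) = X + ((n:ℝ) - 1) * Y := by
  have h : ∀ j : Fin n, (if j = i then X else Y) = Y + (if j = i then X - Y else 0) := by
    intro j; split_ifs <;> ring
  rw [Finset.sum_congr rfl fun j _ => h j, Finset.sum_add_distrib, Finset.sum_const,
    Finset.sum_ite_eq' Finset.univ i]
  simp [Finset.card_univ]
  push_cast
  ring

lemma sum_ite_two {i j : Fin n} (hij : i ≠ j) (X Y Z : ℝ) :
    ∑ k : Fin n, (if k = i then X else if k = j then Y else Z)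
      = X + Y + ((n:ℝ) - 2) * Z := by
  have h : ∀ k : Fin n, (if k = i then X else if k = j then Y else Z)
      = Z + ((if k = i then X - Z else 0) + (if k = j then Y - Z else 0)) := by
    intro k
    by_cases h1 : k = i <;> by_cases h2 : k = j <;> simp_all <;> ring
  rw [Finset.sum_congr rfl fun k _ => h k, Finset.sum_add_distrib, Finset.sum_const,
    Finset.sum_add_distrib, Finset.sum_ite_eq' Finset.univ i, Finset.sum_ite_eq' Finset.univ j]
  simp [Finset.card_univ]
  ring

lemma mom_pow (j0 i : Fin n) (k : ℕ) :
    ∫ U, tF j0 i U ^ k ∂μ = ∫ U, tF j0 j0 U ^ k ∂μ := by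
  by_cases h : i = j0
  · rw [h]
  · exact swap_pow μ j0 j0 i (fun hh => h hh.symm) k

lemma sum_t_one (j0 : Fin n) : ∑ i : Fin n, ∫ U, tF j0 i U ∂μ = 1 := by
  rw [← integral_finset_sum Finset.univ (fun i _ => integ_t μ j0 i)]
  have h : ∀ U : Matrix.unitaryGroup (Fin n) ℂ, (∑ i, tF j0 i U) = 1 := fun U => col_sum U j0
  rw [integral_congr_ae (Filter.Eventually.of_forall h)]
  simp

lemma E4_val (hn : 0 < n) (j0 : Fin n) :
    ∫ U, tF j0 j0 U ^ 2 ∂μ = 2 / ((n:ℝ) * ((n:ℝ)+1)) := by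
  set E4 := ∫ U, tF j0 j0 U ^ 2 ∂μ with hE4
  have base : ∫ U, (∑ i, tF j0 i U) * (∑ j, tF j0 j U) ∂μ = 1 := by
    have h : ∀ U : Matrix.unitaryGroup (Fin n) ℂ,
        (∑ i, tF j0 i U) * (∑ j, tF j0 j U) = 1 := fun U => by
      have hc : (∑ i, tF j0 i U) = 1 := col_sum U j0
      rw [hc]; ring
    rw [integral_congr_ae (Filter.Eventually.of_forall h)]
    simp
  have expand : ∀ U : Matrix.unitaryGroup (Fin n) ℂ,
      (∑ i, tF j0 i U) * (∑ j, tF j0 j U) = ∑ i, ∑ j, tF j0 i U * tF j0 j U := fun U =>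
    Finset.sum_mul_sum _ _ _ _
  rw [integral_congr_ae (Filter.Eventually.of_forall expand)] at base
  rw [integral_finset_sum Finset.univ
    (fun i _ => integrable_finset_sum Finset.univ (fun j _ => integ_tt μ j0 i j))] at base
  have inner : ∀ i : Fin n, (∫ U, ∑ j, tF j0 i U * tF j0 j U ∂μ)
      = E4 + ((n:ℝ)-1) * (E4/2) := by
    intro i
    rw [integral_finset_sum Finset.univ (fun j _ => integ_tt μ j0 i j)]
    have hval : ∀ j : Fin n, (∫ U, tF j0 i U * tF j0 j U ∂μ)
        = if j = i then E4 else E4/2 := by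
      intro j
      by_cases h : j = i
      · subst h
        rw [if_pos rfl, hE4, ← mom_pow μ j0 j 2]
        exact integral_congr_ae (Filter.Eventually.of_forall fun U => by ring)
      · rw [if_neg h, pair_id μ j0 i j (fun hh => h hh.symm), mom_pow μ j0 i 2]
    rw [Finset.sum_congr rfl fun j _ => hval j, sum_ite_one]
  rw [Finset.sum_congr rfl fun i _ => inner i, Finset.sum_const, Finset.card_univ] at base
  simp only [Fintype.card_fin, nsmul_eq_mul] at base
  have hn' : (0:ℝ) < n := by exact_mod_cast hn
  field_simp at base ⊢
  nlinarith [base]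

lemma integ_ttt2 (j0 i j k : Fin n) :
    Integrable (fun U => tF j0 i U * (tF j0 j U * tF j0 k U)) μ := by
  have := integ_ttt μ j0 i j k
  simpa [mul_assoc] using this

lemma E6_val (hn : 0 < n) (j0 : Fin n) :
    ∫ U, tF j0 j0 U ^ 3 ∂μ = 6 / ((n:ℝ) * ((n:ℝ)+1) * ((n:ℝ)+2)) := by
  set E6 := ∫ U, tF j0 j0 U ^ 3 ∂μ with hE6
  have base : ∫ U, (∑ i, tF j0 i U) * ((∑ j, tF j0 j U) * (∑ k, tF j0 k U)) ∂μ = 1 := by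
    have h : ∀ U : Matrix.unitaryGroup (Fin n) ℂ,
        (∑ i, tF j0 i U) * ((∑ j, tF j0 j U) * (∑ k, tF j0 k U)) = 1 := fun U => by
      have hc : (∑ i, tF j0 i U) = 1 := col_sum U j0
      rw [hc]; ring
    rw [integral_congr_ae (Filter.Eventually.of_forall h)]
    simp
  have expand : ∀ U : Matrix.unitaryGroup (Fin n) ℂ,
      (∑ i, tF j0 i U) * ((∑ j, tF j0 j U) * (∑ k, tF j0 k U))
        = ∑ i, ∑ j, ∑ k, tF j0 i U * (tF j0 j U * tF j0 k U) := fun U => by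
    rw [Finset.sum_mul]
    refine Finset.sum_congr rfl fun i _ => ?_
    rw [Finset.sum_mul_sum _ _ _ _, Finset.mul_sum]
    refine Finset.sum_congr rfl fun j _ => ?_
    rw [Finset.mul_sum]
  rw [integral_congr_ae (Filter.Eventually.of_forall expand)] at base
  rw [integral_finset_sum Finset.univ (fun i _ => integrable_finset_sum Finset.univ
    (fun j _ => integrable_finset_sum Finset.univ (fun k _ => integ_ttt2 μ j0 i j k)))] at base
  have swapInt : ∀ i : Fin n, ∫ U, (∑ j, ∑ k, tF j0 i U * (tF j0 j U * tF j0 k U)) ∂μ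
      = ∑ j, ∑ k, ∫ U, tF j0 i U * (tF j0 j U * tF j0 k U) ∂μ := by
    intro i
    rw [integral_finset_sum Finset.univ
      (fun j _ => integrable_finset_sum Finset.univ (fun k _ => integ_ttt2 μ j0 i j k))]
    exact Finset.sum_congr rfl fun j _ =>
      integral_finset_sum Finset.univ (fun k _ => integ_ttt2 μ j0 i j k)
  rw [Finset.sum_congr rfl fun i _ => swapInt i] at base
  -- values of individual integrals
  have vdiag : ∀ i : Fin n, ∫ U, tF j0 i U * (tF j0 i U * tF j0 i U) ∂μ = E6 := by
    intro i
    rw [hE6, ← mom_pow μ j0 i 3]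
    exact integral_congr_ae (Filter.Eventually.of_forall fun U => by ring)
  have v21 : ∀ i k : Fin n, i ≠ k → ∫ U, tF j0 i U * (tF j0 i U * tF j0 k U) ∂μ = E6/3 := by
    intro i k hik
    have h : ∫ U, tF j0 i U * (tF j0 i U * tF j0 k U) ∂μ = ∫ U, tF j0 i U ^2 * tF j0 k U ∂μ :=
      integral_congr_ae (Filter.Eventually.of_forall fun U => by ring)
    rw [h, cube_id μ j0 i k hik, mom_pow μ j0 i 3]
  have v21' : ∀ i j : Fin n, i ≠ j → ∫ U, tF j0 i U * (tF j0 j U * tF j0 i U) ∂μ = E6/3 := by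
    intro i j hij
    have h : ∫ U, tF j0 i U * (tF j0 j U * tF j0 i U) ∂μ = ∫ U, tF j0 i U ^2 * tF j0 j U ∂μ :=
      integral_congr_ae (Filter.Eventually.of_forall fun U => by ring)
    rw [h, cube_id μ j0 i j hij, mom_pow μ j0 i 3]
  have v12 : ∀ i j : Fin n, i ≠ j → ∫ U, tF j0 i U * (tF j0 j U * tF j0 j U) ∂μ = E6/3 := by
    intro i j hij
    have h : ∫ U, tF j0 i U * (tF j0 j U * tF j0 j U) ∂μ = ∫ U, tF j0 j U ^2 * tF j0 i U ∂μ :=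
      integral_congr_ae (Filter.Eventually.of_forall fun U => by ring)
    rw [h, cube_id μ j0 j i hij.symm, mom_pow μ j0 j 3]
  have vdist : ∀ i j k : Fin n, i ≠ j → i ≠ k → j ≠ k →
      ∫ U, tF j0 i U * (tF j0 j U * tF j0 k U) ∂μ = E6/6 := by
    intro i j k hij hik hjk
    rw [triple_id μ j0 i j k hjk hij hik]
    have h1 : ∫ U, tF j0 j U ^2 * tF j0 i U ∂μ = E6/3 := by
      rw [cube_id μ j0 j i hij.symm, mom_pow μ j0 j 3]
    have h2 : ∫ U, tF j0 k U ^2 * tF j0 i U ∂μ = E6/3 := by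
      rw [cube_id μ j0 k i hik.symm, mom_pow μ j0 k 3]
    rw [h1, h2]; ring
  have inner2 : ∀ i j : Fin n, (∑ k, ∫ U, tF j0 i U * (tF j0 j U * tF j0 k U) ∂μ)
      = if j = i then E6 + ((n:ℝ)-1)*(E6/3) else E6/3 + E6/3 + ((n:ℝ)-2)*(E6/6) := by
    intro i j
    by_cases h : j = i
    · subst h
      rw [if_pos rfl]
      have hval : ∀ k : Fin n, (∫ U, tF j0 j U * (tF j0 j U * tF j0 k U) ∂μ)
          = if k = j then E6 else E6/3 := by
        intro k
        by_cases hk : k = j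
        · subst hk; rw [if_pos rfl]; exact vdiag k
        · rw [if_neg hk]; exact v21 j k (fun hh => hk hh.symm)
      rw [Finset.sum_congr rfl fun k _ => hval k, sum_ite_one]
    · rw [if_neg h]
      have hval : ∀ k : Fin n, (∫ U, tF j0 i U * (tF j0 j U * tF j0 k U) ∂μ)
          = if k = i then E6/3 else if k = j then E6/3 else E6/6 := by
        intro k
        by_cases hk : k = i
        · subst hk; rw [if_pos rfl]; exact v21' k j (fun hh => h hh.symm)
        · rw [if_neg hk]
          by_cases hk2 : k = j
          · subst hk2; rw [if_pos rfl]; exact v12 i k (fun hh => h hh.symm)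
          · rw [if_neg hk2]
            exact vdist i j k (fun hh => h hh.symm) (fun hh => hk hh.symm) (fun hh => hk2 hh.symm)
      rw [Finset.sum_congr rfl fun k _ => hval k,
        sum_ite_two (show i ≠ j from fun hh => h hh.symm)]
  have inner1 : ∀ i : Fin n, (∑ j, ∑ k, ∫ U, tF j0 i U * (tF j0 j U * tF j0 k U) ∂μ)
      = (E6 + ((n:ℝ)-1)*(E6/3)) + ((n:ℝ)-1) * (E6/3 + E6/3 + ((n:ℝ)-2)*(E6/6)) := by
    intro i
    rw [Finset.sum_congr rfl fun j _ => inner2 i j, sum_ite_one]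
  rw [Finset.sum_congr rfl fun i _ => inner1 i, Finset.sum_const, Finset.card_univ] at base
  simp only [Fintype.card_fin, nsmul_eq_mul] at base
  have hn' : (0:ℝ) < n := by exact_mod_cast hn
  have h2 : (0:ℝ) < (n:ℝ)+1 := by linarith
  have h3 : (0:ℝ) < (n:ℝ)+2 := by linarith
  field_simp at base ⊢
  nlinarith [base]

end Meas3


noncomputable def qF (j0 i : Fin n) (U : Matrix.unitaryGroup (Fin n) ℂ) : ℝ :=
  min (tF j0 i U) (9/((n:ℝ)+1))

lemma row_orth (U : Matrix.unitaryGroup (Fin n) ℂ) (i k : Fin n) :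
    ∑ j, entry U i j * starRingEnd ℂ (entry U k j) = if i = k then 1 else 0 := by
  have h2 : (U : Matrix (Fin n) (Fin n) ℂ) * star (U : Matrix (Fin n) (Fin n) ℂ) = 1 :=
    Matrix.mem_unitaryGroup_iff.mp U.2
  have h3 := congrArg (fun M => M i k) h2
  simp only [Matrix.mul_apply, Matrix.star_apply, Matrix.one_apply] at h3
  exact h3

lemma orth' (U : Matrix.unitaryGroup (Fin n) ℂ) (i k : Fin n) :
    ∑ j, starRingEnd ℂ (entry U i j) * entry U k j = if i = k then 1 else 0 := by
  have h := congrArg (starRingEnd ℂ) (row_orth U i k)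
  simpa [map_sum, _root_.map_mul, apply_ite] using h

lemma min_abs_sq (z : ℂ) (hn : 0 < n) :
    (min (‖z‖) (3 / Real.sqrt ((n:ℝ)+1)))^2 = min (normSq z) (9/((n:ℝ)+1)) := by
  have h1 : (0:ℝ) ≤ ‖z‖ := norm_nonneg z
  have hs : (0:ℝ) < Real.sqrt ((n:ℝ)+1) := Real.sqrt_pos.2 (by positivity)
  have h2 : (0:ℝ) ≤ 3 / Real.sqrt ((n:ℝ)+1) := by positivity
  have key : ∀ a b : ℝ, 0 ≤ a → 0 ≤ b → (min a b)^2 = min (a^2) (b^2) := by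
    intro a b ha hb
    rcases le_total a b with h | h
    · rw [min_eq_left h, min_eq_left (by nlinarith)]
    · rw [min_eq_right h, min_eq_right (by nlinarith)]
  rw [key _ _ h1 h2, Complex.sq_norm]
  congr 1
  rw [div_pow, Real.sq_sqrt (by positivity)]
  norm_num

lemma stepA (hn : 0 < n) (ψ : ℝ) (U : Matrix.unitaryGroup (Fin n) ℂ) :
    normSqX hn ψ U = ∑ i, (2*((n:ℝ)+1) * qF ⟨0,hn⟩ i U - (2*ψ-1))^2 * tF ⟨0,hn⟩ i U := by
  rw [normSqX]
  set i0 : Fin n := ⟨0, hn⟩ with hi0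
  set c : Fin n → ℝ := fun i =>
    2 * ((n : ℝ) + 1) *
      (min (‖entry U i i0‖) (3 / Real.sqrt ((n : ℝ) + 1))) ^ 2 - (2 * ψ - 1) with hc
  set z : Fin n → ℂ := fun i => (c i : ℂ) * entry U i i0 with hz
  have hS : ∀ j, (∑ i, ((c i : ℝ) : ℂ) * entry U i i0 * starRingEnd ℂ (entry U i j))
      = ∑ i, z i * starRingEnd ℂ (entry U i j) := by
    intro j
    exact Finset.sum_congr rfl fun i _ => by rw [hz, mul_assoc]
  have hcq : ∀ i, c i = 2*((n:ℝ)+1) * qF i0 i U - (2*ψ-1) := by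
    intro i
    rw [hc]
    simp only
    rw [min_abs_sq (entry U i i0) hn]
    rfl
  -- main complex computation
  have main : (((∑ j, normSq (∑ i, z i * starRingEnd ℂ (entry U i j))) : ℝ) : ℂ)
      = ((∑ i, (c i)^2 * tF i0 i U : ℝ) : ℂ) := by
    push_cast
    have e1 : ∀ j, (↑(normSq (∑ i, z i * starRingEnd ℂ (entry U i j))) : ℂ)
        = ∑ i, ∑ k, (z i * starRingEnd ℂ (z k)) * (starRingEnd ℂ (entry U i j) * entry U k j) := by
      intro j
      rw [← Complex.mul_conj]
      rw [map_sum]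
      rw [Finset.sum_mul_sum]
      refine Finset.sum_congr rfl fun i _ => Finset.sum_congr rfl fun k _ => ?_
      rw [_root_.map_mul, Complex.conj_conj]
      ring
    rw [Finset.sum_congr rfl fun j _ => e1 j]
    rw [Finset.sum_comm]
    have e2 : ∀ i, (∑ j, ∑ k, (z i * starRingEnd ℂ (z k)) * (starRingEnd ℂ (entry U i j) * entry U k j))
        = ∑ k, (z i * starRingEnd ℂ (z k)) * (∑ j, starRingEnd ℂ (entry U i j) * entry U k j) := by
      intro i
      rw [Finset.sum_comm]
      exact Finset.sum_congr rfl fun k _ => by rw [Finset.mul_sum]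
    rw [Finset.sum_congr rfl fun i _ => e2 i]
    have e3 : ∀ i, (∑ k, (z i * starRingEnd ℂ (z k)) * (∑ j, starRingEnd ℂ (entry U i j) * entry U k j))
        = ((c i)^2 * tF i0 i U : ℝ) := by
      intro i
      have e4 : ∀ k, (z i * starRingEnd ℂ (z k)) * (∑ j, starRingEnd ℂ (entry U i j) * entry U k j)
          = if k = i then z i * starRingEnd ℂ (z i) else 0 := by
        intro k
        rw [orth' U i k]
        by_cases h : i = k
        · subst h; rw [if_pos rfl, if_pos rfl, mul_one]
        · rw [if_neg h, if_neg (fun hh => h hh.symm), mul_zero]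
      rw [Finset.sum_congr rfl fun k _ => e4 k, Finset.sum_ite_eq' Finset.univ i]
      simp only [Finset.mem_univ, if_true]
      rw [Complex.mul_conj, hz]
      simp only [Complex.normSq_mul, Complex.normSq_ofReal]
      push_cast
      have : tF i0 i U = normSq (entry U i i0) := rfl
      rw [this]
      ring
    rw [Finset.sum_congr rfl fun i _ => e3 i]
    push_cast
    rfl
  have main' : (∑ j, normSq (∑ i, z i * starRingEnd ℂ (entry U i j)))
      = ∑ i, (c i)^2 * tF i0 i U := by exact_mod_cast main
  calc ∑ j, ‖∑ i, ((c i : ℝ) : ℂ) * entry U i i0 * starRingEnd ℂ (entry U i j)‖ ^2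
      = ∑ j, normSq (∑ i, z i * starRingEnd ℂ (entry U i j)) := by
        refine Finset.sum_congr rfl fun j _ => ?_
        rw [hS j, Complex.sq_norm]
    _ = ∑ i, (c i)^2 * tF i0 i U := main'
    _ = ∑ i, (2*((n:ℝ)+1) * qF i0 i U - (2*ψ-1))^2 * tF i0 i U := by
        exact Finset.sum_congr rfl fun i _ => by rw [hcq i]



section MQ
variable (μ : Measure (Matrix.unitaryGroup (Fin n) ℂ)) [μ.IsHaarMeasure] [IsProbabilityMeasure μ]

lemma qF_nonneg (j0 i : Fin n) (U) : 0 ≤ qF j0 i U :=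
  le_min (tF_nonneg j0 i U) (by positivity)
lemma qF_le_t (j0 i : Fin n) (U) : qF j0 i U ≤ tF j0 i U := min_le_left _ _
lemma qF_le_one (j0 i : Fin n) (U) : qF j0 i U ≤ 1 :=
  le_trans (qF_le_t j0 i U) (tF_le_one j0 i U)
lemma cont_qF (j0 i : Fin n) : Continuous (qF j0 i) := (cont_tF j0 i).min continuous_const

lemma integ_q2 (j0 i : Fin n) : Integrable (fun U => qF j0 i U ^ 2) μ := by
  refine bddInteg μ _ ((cont_qF j0 i).pow 2) 1 fun U => abs01 ?_ ?_
  · exact pow_nonneg (qF_nonneg j0 i U) 2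
  · exact pow_le_one₀ (qF_nonneg j0 i U) (qF_le_one j0 i U)

lemma integ_q2t (j0 i : Fin n) : Integrable (fun U => qF j0 i U ^ 2 * tF j0 i U) μ := by
  refine bddInteg μ _ (((cont_qF j0 i).pow 2).mul (cont_tF j0 i)) 1 fun U => abs01 ?_ ?_
  · exact mul_nonneg (pow_nonneg (qF_nonneg j0 i U) 2) (tF_nonneg j0 i U)
  · exact mul_le_one₀ (pow_le_one₀ (qF_nonneg j0 i U) (qF_le_one j0 i U))
      (tF_nonneg j0 i U) (tF_le_one j0 i U)

lemma integ_qt (j0 i : Fin n) : Integrable (fun U => qF j0 i U * tF j0 i U) μ := by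
  refine bddInteg μ _ ((cont_qF j0 i).mul (cont_tF j0 i)) 1 fun U => abs01 ?_ ?_
  · exact mul_nonneg (qF_nonneg j0 i U) (tF_nonneg j0 i U)
  · exact mul_le_one₀ (qF_le_one j0 i U) (tF_nonneg j0 i U) (tF_le_one j0 i U)

lemma swap_q2 (j0 i j : Fin n) (hij : i ≠ j) :
    ∫ U, qF j0 j U ^ 2 ∂μ = ∫ U, qF j0 i U ^ 2 ∂μ := by
  have h := int_swap μ j0 i j hij
    (fun v => (min (Complex.normSq (v i)) (9/((n:ℝ)+1)))^2)
  simpa [qF, tF] using h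

lemma mom_q2 (j0 i : Fin n) : ∫ U, qF j0 i U ^ 2 ∂μ = ∫ U, qF j0 j0 U ^ 2 ∂μ := by
  by_cases h : i = j0
  · rw [h]
  · exact swap_q2 μ j0 j0 i (fun hh => h hh.symm)

/-- pointwise: q² ≥ t² − t³(n+1)/9 -/
lemma q_sq_lb (j0 i : Fin n) (U) :
    tF j0 i U ^2 - tF j0 i U ^3 * (((n:ℝ)+1)/9) ≤ qF j0 i U ^2 := by
  have ht0 := tF_nonneg j0 i U
  have hpos : (0:ℝ) < ((n:ℝ)+1) := by positivity
  rcases le_total (tF j0 i U) (9/((n:ℝ)+1)) with h | h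
  · rw [qF, min_eq_left h]
    nlinarith [pow_nonneg ht0 3]
  · rw [qF, min_eq_right h]
    have h1 : (1:ℝ) ≤ tF j0 i U * (((n:ℝ)+1)/9) := by
      rw [← div_le_iff₀ (by positivity : (0:ℝ) < ((n:ℝ)+1)/9)]
      calc 1 / (((n:ℝ)+1)/9) = 9/((n:ℝ)+1) := by field_simp
        _ ≤ tF j0 i U := h
    have h2 : tF j0 i U ^2 * 1 ≤ tF j0 i U ^2 * (tF j0 i U * (((n:ℝ)+1)/9)) :=
      mul_le_mul_of_nonneg_left h1 (pow_nonneg ht0 2)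
    have h3 : (0:ℝ) ≤ (9/((n:ℝ)+1))^2 := by positivity
    nlinarith [h2]

lemma psi_lb (hn : 0 < n) (j0 : Fin n) :
    4/3 ≤ (n:ℝ)*((n:ℝ)+1) * ∫ U, qF j0 j0 U ^2 ∂μ := by
  have hmono : ∫ U, (tF j0 j0 U ^2 - tF j0 j0 U ^3 * (((n:ℝ)+1)/9)) ∂μ
      ≤ ∫ U, qF j0 j0 U ^2 ∂μ := by
    refine integral_mono ?_ (integ_q2 μ j0 j0) (q_sq_lb j0 j0)
    exact (integ_t2 μ j0 j0).sub ((integ_t3 μ j0 j0).mul_const _)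
  rw [integral_sub (integ_t2 μ j0 j0) ((integ_t3 μ j0 j0).mul_const _),
    integral_mul_const, E4_val μ hn j0, E6_val μ hn j0] at hmono
  have hn' : (0:ℝ) < n := by exact_mod_cast hn
  have h2 : (0:ℝ) < (n:ℝ)+1 := by linarith
  have h3 : (0:ℝ) < (n:ℝ)+2 := by linarith
  have key : (n:ℝ)*((n:ℝ)+1) * (2 / ((n:ℝ) * ((n:ℝ)+1))
      - 6 / ((n:ℝ) * ((n:ℝ)+1) * ((n:ℝ)+2)) * (((n:ℝ)+1)/9)) = 2 - (2/3)*(((n:ℝ)+1)/((n:ℝ)+2)) := by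
    field_simp
    ring
  have hfrac : ((n:ℝ)+1)/((n:ℝ)+2) ≤ 1 := by
    rw [div_le_one h3]; linarith
  nlinarith [mul_le_mul_of_nonneg_left hmono (by positivity : (0:ℝ) ≤ (n:ℝ)*((n:ℝ)+1))]

end MQ

theorem expected_norm_sq_certificate_term_aux (n : ℕ) (hn : 0 < n)
    (μ : Measure (Matrix.unitaryGroup (Fin n) ℂ)) [μ.IsHaarMeasure] [IsProbabilityMeasure μ]
    (ψ : ℝ)
    (hψ : ψ = (n : ℝ) * ((n : ℝ) + 1) *
      ∫ U, (min (‖entry U ⟨0, hn⟩ ⟨0, hn⟩‖) (3 / Real.sqrt ((n : ℝ) + 1))) ^ 4 ∂μ) :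
    (∫ U, normSqX hn ψ U ∂μ ≤ 24 * ((n : ℝ) + 1) / ((n : ℝ) + 2) + 1 - 4 * ψ ^ 2) ∧
    (1 / 2 ≤ ψ → ∫ U, normSqX hn ψ U ∂μ ≤ 24) := by
  set i0 : Fin n := ⟨0, hn⟩ with hi0
  set A : ℝ := (n:ℝ) + 1 with hA
  set c : ℝ := 2*ψ - 1 with hcdef
  set Q : ℝ := ∫ U, qF i0 i0 U ^2 ∂μ with hQdef
  set E6 : ℝ := ∫ U, tF i0 i0 U ^3 ∂μ with hE6def
  have hn' : (0:ℝ) < n := by exact_mod_cast hn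
  have hA0 : (0:ℝ) < A := by rw [hA]; linarith
  -- ψ in terms of Q
  have hψq : ψ = (n:ℝ) * A * Q := by
    rw [hψ, hQdef]
    congr 1
    refine integral_congr_ae (Filter.Eventually.of_forall fun U => ?_)
    dsimp only
    rw [hA]
    have h4 : (min (‖entry U i0 i0‖) (3 / Real.sqrt ((n:ℝ)+1)))^4
        = ((min (‖entry U i0 i0‖) (3 / Real.sqrt ((n:ℝ)+1)))^2)^2 := by ring
    rw [h4, min_abs_sq _ hn]
    rfl
  have hpsi_lb : 4/3 ≤ ψ := by
    rw [hψq]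
    exact psi_lb μ hn i0
  have hc0 : 0 ≤ c := by rw [hcdef]; linarith
  -- the main integral bound
  have hkey : ∫ U, normSqX hn ψ U ∂μ ≤ 24 * A / ((n:ℝ) + 2) + 1 - 4*ψ^2 := by
    have hstep : ∫ U, normSqX hn ψ U ∂μ
        = ∑ i, ∫ U, (2*A * qF i0 i U - c)^2 * tF i0 i U ∂μ := by
      rw [integral_congr_ae (Filter.Eventually.of_forall (stepA hn ψ))]
      refine integral_finset_sum Finset.univ fun i _ => ?_
      refine bddInteg μ _ ?_ ((18 + |c|)^2 * 1) fun U => ?_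
      · exact (((continuous_const.mul (cont_qF i0 i)).sub continuous_const).pow 2).mul
          (cont_tF i0 i)
      · have hq9 : qF i0 i U ≤ 9/A := min_le_right _ _
        have hq0 := qF_nonneg i0 i U
        have h18 : 2*A*qF i0 i U ≤ 18 := by
          calc 2*A*qF i0 i U ≤ 2*A*(9/A) :=
                mul_le_mul_of_nonneg_left hq9 (by positivity)
            _ = 18 * (A/A) := by ring
            _ = 18 := by rw [div_self hA0.ne', mul_one]
        have h0 : 0 ≤ 2*A*qF i0 i U := by positivity
        have hb1 : |2*A*qF i0 i U - c| ≤ 18 + |c| := by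
          rw [abs_sub_le_iff]
          constructor
          · linarith [neg_abs_le c]
          · linarith [le_abs_self c]
        have hb2 : (2*A*qF i0 i U - c)^2 ≤ (18+|c|)^2 := by
          have hb3 := pow_le_pow_left₀ (abs_nonneg (2*A*qF i0 i U - c)) hb1 2
          rwa [_root_.sq_abs] at hb3
        have hb4 : (2*A*qF i0 i U - c)^2 * tF i0 i U ≤ (18+|c|)^2 * 1 :=
          mul_le_mul hb2 (tF_le_one i0 i U) (tF_nonneg i0 i U) (by positivity)
        calc |(2*A*qF i0 i U - c)^2 * tF i0 i U|
            = (2*A*qF i0 i U - c)^2 * tF i0 i U := by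
              rw [abs_mul, _root_.abs_of_nonneg (tF_nonneg i0 i U), _root_.abs_pow, _root_.sq_abs]
          _ ≤ (18+|c|)^2 * 1 := hb4
    rw [hstep]
    -- per-index bound
    have hterm : ∀ i : Fin n, ∫ U, (2*A * qF i0 i U - c)^2 * tF i0 i U ∂μ
        ≤ 4*A^2*E6 - 4*A*c*Q + c^2 * ∫ U, tF i0 i U ∂μ := by
      intro i
      have hsplit : ∫ U, (2*A * qF i0 i U - c)^2 * tF i0 i U ∂μ
          = 4*A^2 * (∫ U, qF i0 i U ^2 * tF i0 i U ∂μ)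
            - 4*A*c * (∫ U, qF i0 i U * tF i0 i U ∂μ)
            + c^2 * ∫ U, tF i0 i U ∂μ := by
        have hpt : ∀ U, (2*A * qF i0 i U - c)^2 * tF i0 i U
            = 4*A^2 * (qF i0 i U ^2 * tF i0 i U)
              + (c^2 * tF i0 i U - 4*A*c * (qF i0 i U * tF i0 i U)) := fun U => by ring
        rw [integral_congr_ae (Filter.Eventually.of_forall hpt)]
        have ia : Integrable (fun U => 4*A^2 * (qF i0 i U ^2 * tF i0 i U)) μ :=
          (integ_q2t μ i0 i).const_mul _
        have ic : Integrable (fun U => c^2 * tF i0 i U) μ := (integ_t μ i0 i).const_mul _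
        have id2 : Integrable (fun U => 4*A*c * (qF i0 i U * tF i0 i U)) μ :=
          (integ_qt μ i0 i).const_mul _
        have ib : Integrable (fun U => c^2 * tF i0 i U - 4*A*c * (qF i0 i U * tF i0 i U)) μ :=
          ic.sub id2
        rw [integral_add ia ib, integral_sub ic id2,
          MeasureTheory.integral_const_mul, MeasureTheory.integral_const_mul,
          MeasureTheory.integral_const_mul]
        ring
      rw [hsplit]
      have b1 : ∫ U, qF i0 i U ^2 * tF i0 i U ∂μ ≤ E6 := by
        have hmono : ∫ U, qF i0 i U ^2 * tF i0 i U ∂μ ≤ ∫ U, tF i0 i U ^3 ∂μ := by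
          refine integral_mono (integ_q2t μ i0 i) (integ_t3 μ i0 i) fun U => ?_
          have h1 := qF_nonneg i0 i U
          have h2 := qF_le_t i0 i U
          have h3 := tF_nonneg i0 i U
          nlinarith [mul_le_mul_of_nonneg_right (pow_le_pow_left₀ h1 h2 2) h3]
        rw [mom_pow μ i0 i 3] at hmono
        exact hmono
      have b2 : Q ≤ ∫ U, qF i0 i U * tF i0 i U ∂μ := by
        have hmono : ∫ U, qF i0 i U ^2 ∂μ ≤ ∫ U, qF i0 i U * tF i0 i U ∂μ := by
          refine integral_mono (integ_q2 μ i0 i) (integ_qt μ i0 i) fun U => ?_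
          have h1 := qF_nonneg i0 i U
          have h2 := qF_le_t i0 i U
          nlinarith
        rw [mom_q2 μ i0 i] at hmono
        exact hmono
      have hA2 : (0:ℝ) ≤ 4*A^2 := by positivity
      have hAc : (0:ℝ) ≤ 4*A*c := by positivity
      nlinarith [mul_le_mul_of_nonneg_left b1 hA2, mul_le_mul_of_nonneg_left b2 hAc]
    calc (∑ i, ∫ U, (2*A * qF i0 i U - c)^2 * tF i0 i U ∂μ)
        ≤ ∑ i : Fin n, (4*A^2*E6 - 4*A*c*Q + c^2 * ∫ U, tF i0 i U ∂μ) :=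
          Finset.sum_le_sum fun i _ => hterm i
      _ = (n:ℝ) * (4*A^2*E6 - 4*A*c*Q) + c^2 * ∑ i, ∫ U, tF i0 i U ∂μ := by
          rw [Finset.sum_add_distrib, Finset.sum_const, Finset.card_univ, Finset.mul_sum]
          simp [nsmul_eq_mul]
      _ = (n:ℝ) * (4*A^2*E6 - 4*A*c*Q) + c^2 := by rw [sum_t_one μ i0, mul_one]
      _ ≤ 24 * A / ((n:ℝ) + 2) + 1 - 4*ψ^2 := by
          have hE6v : E6 = 6 / ((n:ℝ) * A * ((n:ℝ)+2)) := by
            rw [hE6def, E6_val μ hn i0, hA]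
          have h2 : (0:ℝ) < (n:ℝ)+2 := by linarith
          have hterm1 : (n:ℝ) * (4*A^2*E6) = 24 * A / ((n:ℝ)+2) := by
            rw [hE6v]
            field_simp
            ring
          have hterm2 : (n:ℝ) * (4*A*c*Q) = 4*c*ψ := by
            rw [hψq]; ring
          have hfinal : c^2 - 4*c*ψ = 1 - 4*ψ^2 := by rw [hcdef]; ring
          have hexp : (n:ℝ) * (4*A^2*E6 - 4*A*c*Q) = (n:ℝ)*(4*A^2*E6) - (n:ℝ)*(4*A*c*Q) := by
            ring
          rw [hexp, hterm1, hterm2]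
          linarith [hfinal]
  constructor
  · exact hkey
  · intro hhalf
    have h2 : (0:ℝ) < (n:ℝ)+2 := by linarith
    have hb : 24 * A / ((n:ℝ)+2) ≤ 24 := by
      rw [div_le_iff₀ h2, hA]; nlinarith
    nlinarith [hkey, sq_nonneg ψ]


end Work


/-- With `ψₙ = n(n+1)·E[min(|v₁|,3/√(n+1))⁴]` for `v` uniform on the sphere,
and `x` the random vector built from the rows of a Haar unitary `U`,
`E[‖x‖₂²] ≤ 24(n+1)/(n+2) + 1 − 4ψₙ²`; in particular `E[‖x‖₂²] ≤ 24` when `ψₙ ≥ 1/2`. -/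
theorem expected_norm_sq_certificate_term (n : ℕ) (hn : 0 < n)
    (μ : Measure (Matrix.unitaryGroup (Fin n) ℂ)) [μ.IsHaarMeasure] [IsProbabilityMeasure μ]
    (ψ : ℝ)
    (hψ : ψ = (n : ℝ) * ((n : ℝ) + 1) *
      ∫ U, (min (‖entry U ⟨0, hn⟩ ⟨0, hn⟩‖) (3 / Real.sqrt ((n : ℝ) + 1))) ^ 4 ∂μ) :
    (∫ U, normSqX hn ψ U ∂μ ≤ 24 * ((n : ℝ) + 1) / ((n : ℝ) + 2) + 1 - 4 * ψ ^ 2) ∧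
    (1 / 2 ≤ ψ → ∫ U, normSqX hn ψ U ∂μ ≤ 24) :=
  Work.expected_norm_sq_certificate_term_aux n hn μ ψ hψ
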